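/- Consider the chemostat system under the quantized feedback: u = D_i when ξ ∈ Y_i, with regions Y_i = {ξ : ȳ_i ≤ y(ξ) ≤ ō_i}. If Conditions y_b(D_i) < ȳ_i and y_a(D_i) > ō_i hold for index i < n, then along any (Filippov) solution starting in Y_i, the function V(ξ) = y_a(D_n) − y(ξ) is strictly decreasing as long as the solution stays in Y_i; consequently every such solution leaves Y_i in finite time through the boundary y(ξ) = ō_i. -/

import Mathlib

open Set Filter Topology

lemma ev_gt_of_deriv_pos {f : ℝ → ℝ} {a f' : ℝ} (hf : HasDerivAt f f' a) (h : 0 < f') :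
    ∀ᶠ u in 𝓝[>] a, f a < f u := by
  have hsl : Filter.Tendsto (slope f a) (𝓝[≠] a) (𝓝 f') :=
    hasDerivAt_iff_tendsto_slope.1 hf
  have h2 : ∀ᶠ u in 𝓝[≠] a, 0 < slope f a u := hsl.eventually (eventually_gt_nhds h)
  have h3 : ∀ᶠ u in 𝓝[>] a, 0 < slope f a u :=
    h2.filter_mono (nhdsWithin_mono a fun u hu => ne_of_gt hu)
  refine h3.mp (eventually_nhdsWithin_of_forall fun u hu h4 => ?_)
  have hua : 0 < u - a := sub_pos.2 hu
  have h5 := mul_pos h4 hua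
  rw [slope_def_field, div_mul_cancel₀] at h5
  · linarith
  · exact ne_of_gt hua

lemma haldane_identity (μbar kS kI Di r u : ℝ) (hkI : 0 < kI) (hu : 0 < u) (hkS : 0 < kS)
    (hr : 0 < r)
    (hroot : μbar * r / (kS + r + r^2/kI) = Di) :
    μbar*(kS - u^2/kI)/(kS+u+u^2/kI)^2 * (Di*(r-u))
      + (μbar*u/(kS+u+u^2/kI)) * ((μbar*u/(kS+u+u^2/kI)) - Di)
    = Di * (μbar*kS*(r-u)^2/(r*(kS+u+u^2/kI)^2)) := by
  have e1 : kS + u + u^2/kI = (kS*kI + u*kI + u^2)/kI := by field_simp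
  have e2 : kS + r + r^2/kI = (kS*kI + r*kI + r^2)/kI := by field_simp
  have e3 : kS - u^2/kI = (kS*kI - u^2)/kI := by field_simp
  have p1 : (0:ℝ) < kS*kI + u*kI + u^2 := by positivity
  have p2 : (0:ℝ) < kS*kI + r*kI + r^2 := by positivity
  subst hroot
  rw [e1, e2, e3]
  rw [div_pow]
  field_simp
  ring

lemma key_pos (μbar kS kI k α Di sIn ylo yhi sai sbi u v : ℝ)
    (hμbar : 0 < μbar) (hkS : 0 < kS) (hkI : 0 < kI) (hk : 0 < k) (hα : 0 < α)
    (hDipos : 0 < Di)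
    (hDi2 : Di < μbar * Real.sqrt (kS*kI) /
      (kS + Real.sqrt (kS*kI) + (Real.sqrt (kS*kI))^2/kI))
    (hsa1 : 0 < sai) (hsb1 : 0 < sbi)
    (hra : μbar * sai / (kS + sai + sai^2/kI) = Di)
    (hrb : μbar * sbi / (kS + sbi + sbi^2/kI) = Di)
    (hylo : 0 ≤ ylo)
    (hcond1 : α * Di / k * (sIn - sbi) < ylo)
    (hcond2 : yhi < α * Di / k * (sIn - sai))
    (hu : 0 < u) (hv : 0 < v)
    (hy1 : ylo ≤ α * (μbar*u/(kS+u+u^2/kI)) * v)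
    (hy2 : α * (μbar*u/(kS+u+u^2/kI)) * v ≤ yhi) :
    0 < μbar*(kS - u^2/kI)/(kS+u+u^2/kI)^2
          * (Di*(sIn-u) - k*(μbar*u/(kS+u+u^2/kI))*v)
        + (μbar*u/(kS+u+u^2/kI)) * ((μbar*u/(kS+u+u^2/kI)) - Di) := by
  have hq : (0:ℝ) < kS + u + u^2/kI := by positivity
  set μu : ℝ := μbar*u/(kS+u+u^2/kI) with hμu
  set dμu : ℝ := μbar*(kS - u^2/kI)/(kS+u+u^2/kI)^2 with hdμu
  have hμupos : 0 < μu := by rw [hμu]; positivity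
  set sd : ℝ := Di*(sIn-u) - k*μu*v with hsd
  have h_a : Di*(sai - u) < sd := by
    have h1 : k * μu * v ≤ k / α * yhi := by
      have := mul_le_mul_of_nonneg_left hy2 (le_of_lt (div_pos hk hα))
      calc k * μu * v = k / α * (α * μu * v) := by field_simp
        _ ≤ k / α * yhi := this
    have h2 : k / α * yhi < Di * (sIn - sai) := by
      have := mul_lt_mul_of_pos_left hcond2 (div_pos hk hα)
      calc k / α * yhi < k / α * (α * Di / k * (sIn - sai)) := this
        _ = Di * (sIn - sai) := by field_simp
    rw [hsd]; nlinarith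
  have h_b : sd < Di*(sbi - u) := by
    have h1 : k / α * ylo ≤ k * μu * v := by
      have := mul_le_mul_of_nonneg_left hy1 (le_of_lt (div_pos hk hα))
      calc k / α * ylo ≤ k / α * (α * μu * v) := this
        _ = k * μu * v := by field_simp
    have h2 : Di * (sIn - sbi) < k / α * ylo := by
      have := mul_lt_mul_of_pos_left hcond1 (div_pos hk hα)
      calc Di * (sIn - sbi) = k / α * (α * Di / k * (sIn - sbi)) := by field_simp
        _ < k / α * ylo := this
    rw [hsd]; nlinarith
  show 0 < dμu * sd + μu * (μu - Di)
  rcases lt_trichotomy (kS - u^2/kI) 0 with hneg | hzero | hpos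
  · have hdneg : dμu < 0 := by
      rw [hdμu]
      apply div_neg_of_neg_of_pos
      · nlinarith
      · positivity
    have hgt : dμu * (Di*(sbi - u)) < dμu * sd :=
      (mul_lt_mul_left_of_neg hdneg).2 h_b
    have hid := haldane_identity μbar kS kI Di sbi u hkI hu hkS hsb1 hrb
    have hnn : 0 ≤ Di * (μbar*kS*(sbi-u)^2/(sbi*(kS+u+u^2/kI)^2)) := by positivity
    rw [← hμu, ← hdμu] at hid
    linarith [hgt, hnn, hid]
  · have hu2 : u = Real.sqrt (kS*kI) := by
      have : u^2 = kS*kI := by linarith [div_eq_iff (ne_of_gt hkI) |>.mp (by linarith : u^2/kI = kS)]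
      rw [← this, Real.sqrt_sq hu.le]
    have hdz : dμu = 0 := by rw [hdμu, hzero]; simp
    have hμgt : Di < μu := by rw [hμu, hu2]; exact hDi2
    rw [hdz, zero_mul, zero_add]
    exact mul_pos hμupos (by linarith)
  · have hdpos : 0 < dμu := by rw [hdμu]; positivity
    have hgt : dμu * (Di*(sai - u)) < dμu * sd :=
      (mul_lt_mul_iff_right₀ hdpos).2 h_a
    have hid := haldane_identity μbar kS kI Di sai u hkI hu hkS hsa1 hra
    have hnn : 0 ≤ Di * (μbar*kS*(sai-u)^2/(sai*(kS+u+u^2/kI)^2)) := by positivity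
    rw [← hμu, ← hdμu] at hid
    linarith [hgt, hnn, hid]

lemma last_cross {f : ℝ → ℝ} {t0 c : ℝ} (hf : ContinuousOn f (Set.Icc 0 t0))
    (ht0 : 0 ≤ t0) (h0 : c ≤ f 0) (hend : f t0 < c) :
    ∃ w, w ∈ Ico (0:ℝ) t0 ∧ f w = c ∧ ∀ t ∈ Ioc w t0, f t < c := by
  set C : Set ℝ := {t ∈ Icc (0:ℝ) t0 | c ≤ f t} with hC
  have hCne : C.Nonempty := ⟨0, ⟨left_mem_Icc.2 ht0, h0⟩⟩
  have hCbdd : BddAbove C := BddAbove.mono (fun t ht => ht.1) (bddAbove_Icc)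
  have hCcl : IsClosed C := hf.preimage_isClosed_of_isClosed isClosed_Icc isClosed_Ici
  set w := sSup C with hw
  have hwC : w ∈ C := hCcl.csSup_mem hCne hCbdd
  have hwge : c ≤ f w := hwC.2
  have hw0 : 0 ≤ w := hwC.1.1
  have hwt0 : w ≤ t0 := hwC.1.2
  have hwne : w ≠ t0 := by intro h; rw [h] at hwge; linarith
  have hwlt : w < t0 := lt_of_le_of_ne hwt0 hwne
  have hafter : ∀ t ∈ Ioc w t0, f t < c := by
    intro t ht
    by_contra h
    push_neg at h
    have : t ∈ C := ⟨⟨le_trans hw0 ht.1.le, ht.2⟩, h⟩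
    exact absurd (le_csSup hCbdd this) (not_le.2 ht.1)
  have hle : f w ≤ c := by
    have hT : Tendsto f (𝓝[Ioc w t0] w) (𝓝 (f w)) := by
      have hcw : ContinuousWithinAt f (Icc 0 t0) w := hf.continuousWithinAt hwC.1
      exact hcw.mono (fun t ht => ⟨le_trans hw0 ht.1.le, ht.2⟩)
    have hne : (𝓝[Ioc w t0] w).NeBot := by
      rw [nhdsWithin_Ioc_eq_nhdsGT hwlt]
      infer_instance
    exact le_of_tendsto hT (eventually_nhdsWithin_of_forall
      (fun t ht => (hafter t ht).le))
  exact ⟨w, ⟨hw0, hwlt⟩, le_antisymm hle hwge, hafter⟩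

lemma first_cross {f : ℝ → ℝ} {t0 c : ℝ} (hf : ContinuousOn f (Set.Icc 0 t0))
    (ht0 : 0 ≤ t0) (h0 : f 0 ≤ c) (hend : c ≤ f t0) :
    ∃ T, T ∈ Icc (0:ℝ) t0 ∧ f T = c ∧ ∀ t ∈ Ico (0:ℝ) T, f t < c := by
  set C : Set ℝ := {t ∈ Icc (0:ℝ) t0 | c ≤ f t} with hC
  have hCne : C.Nonempty := ⟨t0, ⟨right_mem_Icc.2 ht0, hend⟩⟩
  have hCbdd : BddBelow C := BddBelow.mono (fun t ht => ht.1) (bddBelow_Icc)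
  have hCcl : IsClosed C := hf.preimage_isClosed_of_isClosed isClosed_Icc isClosed_Ici
  set T := sInf C with hT
  have hTC : T ∈ C := hCcl.csInf_mem hCne hCbdd
  have hTge : c ≤ f T := hTC.2
  have hT0 : 0 ≤ T := hTC.1.1
  have hTt0 : T ≤ t0 := hTC.1.2
  have hbefore : ∀ t ∈ Ico (0:ℝ) T, f t < c := by
    intro t ht
    by_contra h
    push_neg at h
    have : t ∈ C := ⟨⟨ht.1, le_trans ht.2.le hTt0⟩, h⟩
    exact absurd (csInf_le hCbdd this) (not_le.2 ht.2)
  have hle : f T ≤ c := by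
    rcases eq_or_lt_of_le hT0 with h | h
    · rw [← h]; exact h0
    · have hTm : Tendsto f (𝓝[Ico 0 T] T) (𝓝 (f T)) := by
        have hcw : ContinuousWithinAt f (Icc 0 t0) T := hf.continuousWithinAt hTC.1
        exact hcw.mono (fun t ht => ⟨ht.1, le_trans ht.2.le hTt0⟩)
      have hne : (𝓝[Ico 0 T] T).NeBot := by
        rw [nhdsWithin_Ico_eq_nhdsLT h]
        infer_instance
      exact le_of_tendsto hTm (eventually_nhdsWithin_of_forall
        (fun t ht => (hbefore t ht).le))
  exact ⟨T, hTC.1, le_antisymm hle hTge, hbefore⟩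

noncomputable def PhiFun (μbar kS kI k α Di sIn : ℝ) (p : ℝ × ℝ) : ℝ :=
  p.2 / (μbar * p.1 / (kS + p.1 + p.1^2/kI)) *
    (μbar*(kS - p.1^2/kI)/(kS + p.1 + p.1^2/kI)^2 * (Di*(sIn - p.1) - k/α*p.2)
      + (μbar*p.1/(kS + p.1 + p.1^2/kI)) * ((μbar*p.1/(kS + p.1 + p.1^2/kI)) - Di))

lemma phi_pos (μbar kS kI k α Di sIn ylo yhi sai sbi u w : ℝ)
    (hμbar : 0 < μbar) (hkS : 0 < kS) (hkI : 0 < kI) (hk : 0 < k) (hα : 0 < α)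
    (hDipos : 0 < Di)
    (hDi2 : Di < μbar * Real.sqrt (kS*kI) /
      (kS + Real.sqrt (kS*kI) + (Real.sqrt (kS*kI))^2/kI))
    (hsa1 : 0 < sai) (hsb1 : 0 < sbi)
    (hra : μbar * sai / (kS + sai + sai^2/kI) = Di)
    (hrb : μbar * sbi / (kS + sbi + sbi^2/kI) = Di)
    (hylo : 0 ≤ ylo)
    (hcond1 : α * Di / k * (sIn - sbi) < ylo)
    (hcond2 : yhi < α * Di / k * (sIn - sai))
    (hu : 0 < u) (hw : 0 < w) (hy1 : ylo ≤ w) (hy2 : w ≤ yhi) :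
    0 < PhiFun μbar kS kI k α Di sIn (u, w) := by
  have hq : (0:ℝ) < kS + u + u^2/kI := by positivity
  have hμu : 0 < μbar*u/(kS+u+u^2/kI) := by positivity
  set v : ℝ := w/(α*(μbar*u/(kS+u+u^2/kI))) with hv
  have hvpos : 0 < v := div_pos hw (mul_pos hα hμu)
  have hwv : α*(μbar*u/(kS+u+u^2/kI))*v = w := by
    rw [hv]; field_simp
  have hk0 := key_pos μbar kS kI k α Di sIn ylo yhi sai sbi u v hμbar hkS hkI hk hα
    hDipos hDi2 hsa1 hsb1 hra hrb hylo hcond1 hcond2 hu hvpos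
    (by rw [hwv]; exact hy1) (by rw [hwv]; exact hy2)
  have hkv : k*(μbar*u/(kS+u+u^2/kI))*v = k/α*w := by
    rw [hv]; field_simp
  rw [hkv] at hk0
  unfold PhiFun
  simp only
  exact mul_pos (div_pos hw hμu) hk0

lemma Yderiv (μbar kS kI k α Di sIn : ℝ) (s x : ℝ → ℝ) (t : ℝ)
    (hkI : 0 < kI) (hkS : 0 < kS) (hα : 0 < α) (hμbar : 0 < μbar) (hst : 0 < s t)
    (hsd : HasDerivAt s (Di*(sIn - s t) - k*(μbar*s t/(kS+s t+(s t)^2/kI))*x t) t)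
    (hxd : HasDerivAt x (((μbar*s t/(kS+s t+(s t)^2/kI)) - Di)*x t) t) :
    HasDerivAt (fun τ => α * (μbar * s τ / (kS + s τ + (s τ)^2/kI)) * x τ)
      (PhiFun μbar kS kI k α Di sIn
        (s t, α * (μbar * s t / (kS + s t + (s t)^2/kI)) * x t)) t := by
  have hq : 0 < kS + s t + (s t)^2/kI := by
    have := div_nonneg (sq_nonneg (s t)) hkI.le
    linarith
  set sd : ℝ := Di*(sIn - s t) - k*(μbar*s t/(kS+s t+(s t)^2/kI))*x t with hsdv
  set xd : ℝ := ((μbar*s t/(kS+s t+(s t)^2/kI)) - Di)*x t with hxdv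
  have hnum : HasDerivAt (fun τ => μbar * s τ) (μbar * sd) t := hsd.const_mul μbar
  have hden : HasDerivAt (fun τ => kS + s τ + (s τ)^2/kI)
      (0 + sd + ((2:ℕ) * s t ^ (2-1) * sd)/kI) t :=
    ((hasDerivAt_const t kS).add hsd).add ((hsd.pow 2).div_const kI)
  have hdiv : HasDerivAt (fun τ => μbar * s τ / (kS + s τ + (s τ)^2/kI))
      (((μbar*sd) * (kS + s t + (s t)^2/kI)
        - (μbar*s t) * (0 + sd + ((2:ℕ) * s t ^ (2-1) * sd)/kI))
        / (kS + s t + (s t)^2/kI)^2) t := hnum.div hden hq.ne'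
  have hfull := (hdiv.const_mul α).mul hxd
  refine hfull.congr_deriv ?_
  rw [hsdv, hxdv]
  unfold PhiFun
  simp only
  have e1 : kS + s t + (s t)^2/kI = (kS*kI + s t*kI + (s t)^2)/kI := by field_simp
  have e3 : kS - (s t)^2/kI = (kS*kI - (s t)^2)/kI := by field_simp
  have p1 : (0:ℝ) < kS*kI + s t*kI + (s t)^2 := by positivity
  rw [e1, e3]
  rw [div_pow]
  field_simp
  ring

/-- Under the quantized feedback u = D_i on Y_i, if y_b(D_i) < ȳ_i and
y_a(D_i) > ō_i, then V = y_a(D_n) − y is strictly decreasing along any solution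
while it stays in Y_i, and every solution starting in Y_i exits in finite time
through the boundary y = ō_i. -/
theorem exit_region (μbar kS kI k sin α Di yan ylo yhi sai sbi : ℝ)
    (hμbar : 0 < μbar) (hkS : 0 < kS) (hkI : 0 < kI) (hk : 0 < k) (hα : 0 < α)
    (hsbar : Real.sqrt (kS * kI) < sin)
    (μ : ℝ → ℝ)
    (hμ : ∀ s : ℝ, μ s = μbar * s / (kS + s + s ^ 2 / kI))
    -- s_a(D_i) < s̄ < s_b(D_i): the roots of μ(s) = D_i
    (hDi1 : μ sin < Di) (hDi2 : Di < μ (Real.sqrt (kS * kI)))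
    (hsa1 : 0 < sai) (hsa2 : sai < Real.sqrt (kS * kI)) (hra : μ sai = Di)
    (hsb1 : Real.sqrt (kS * kI) < sbi) (hrb : μ sbi = Di)
    -- region bounds and conditions y_b(D_i) < ȳ_i, y_a(D_i) > ō_i
    (hylo : 0 ≤ ylo) (hlohi : ylo < yhi)
    (hcond1 : α * Di / k * (sin - sbi) < ylo)
    (hcond2 : α * Di / k * (sin - sai) > yhi)
    -- the solution: positive, continuous, satisfying the dynamics with u = D_i
    -- whenever it lies in the region Y_i
    (s x : ℝ → ℝ) (hscont : Continuous s) (hxcont : Continuous x)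
    (hspos : ∀ t : ℝ, 0 ≤ t → 0 < s t) (hxpos : ∀ t : ℝ, 0 ≤ t → 0 < x t)
    (hs : ∀ t : ℝ, 0 ≤ t → ylo ≤ α * μ (s t) * x t → α * μ (s t) * x t ≤ yhi →
      HasDerivAt s (Di * (sin - s t) - k * μ (s t) * x t) t)
    (hx : ∀ t : ℝ, 0 ≤ t → ylo ≤ α * μ (s t) * x t → α * μ (s t) * x t ≤ yhi →
      HasDerivAt x ((μ (s t) - Di) * x t) t)
    -- initial condition in Y_i
    (hinit1 : ylo ≤ α * μ (s 0) * x 0) (hinit2 : α * μ (s 0) * x 0 ≤ yhi) :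
    -- V = y_a(D_n) − y strictly decreases while the solution stays in Y_i
    (∀ t1 t2 : ℝ, 0 ≤ t1 → t1 < t2 →
      (∀ τ ∈ Set.Icc t1 t2, ylo ≤ α * μ (s τ) * x τ ∧ α * μ (s τ) * x τ ≤ yhi) →
      yan - α * μ (s t2) * x t2 < yan - α * μ (s t1) * x t1) ∧
    -- the solution leaves Y_i in finite time through y = ō_i
    (∃ T : ℝ, 0 ≤ T ∧ α * μ (s T) * x T = yhi ∧
      ∀ t ∈ Set.Ico (0 : ℝ) T,
        ylo ≤ α * μ (s t) * x t ∧ α * μ (s t) * x t < yhi) := by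
  simp only [hμ] at hDi1 hDi2 hra hrb hs hx hinit1 hinit2 ⊢
  have hsq0 : 0 < Real.sqrt (kS*kI) := Real.sqrt_pos.2 (by positivity)
  have hsin0 : 0 < sin := hsq0.trans hsbar
  have hsb0 : 0 < sbi := hsq0.trans hsb1
  have hqpos : ∀ u : ℝ, 0 < u → 0 < kS + u + u^2/kI := fun u hu => by positivity
  have hDipos : 0 < Di := (div_pos (mul_pos hμbar hsin0) (hqpos sin hsin0)).trans hDi1
  set Y : ℝ → ℝ := fun t => α * (μbar * s t / (kS + s t + (s t)^2/kI)) * x t with hYdef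
  have hYpos : ∀ t : ℝ, 0 ≤ t → 0 < Y t := fun t ht =>
    mul_pos (mul_pos hα (div_pos (mul_pos hμbar (hspos t ht))
      (hqpos _ (hspos t ht)))) (hxpos t ht)
  have hQc : Continuous (fun t => kS + s t + (s t)^2/kI) :=
    (continuous_const.add hscont).add ((hscont.pow 2).div_const kI)
  have hYcont : ContinuousOn Y (Ici 0) := by
    apply ContinuousOn.mul
    · apply ContinuousOn.mul continuousOn_const
      apply ContinuousOn.div (continuous_const.mul hscont).continuousOn hQc.continuousOn
      intro t ht
      exact (hqpos (s t) (hspos t ht)).ne'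
    · exact hxcont.continuousOn
  have hYd : ∀ t : ℝ, 0 ≤ t → ylo ≤ Y t → Y t ≤ yhi →
      HasDerivAt Y (PhiFun μbar kS kI k α Di sin (s t, Y t)) t := fun t ht h1 h2 =>
    Yderiv μbar kS kI k α Di sin s x t hkI hkS hα hμbar (hspos t ht)
      (hs t ht h1 h2) (hx t ht h1 h2)
  have hPpos : ∀ u w : ℝ, 0 < u → 0 < w → ylo ≤ w → w ≤ yhi →
      0 < PhiFun μbar kS kI k α Di sin (u, w) := fun u w h1 h2 h3 h4 =>
    phi_pos μbar kS kI k α Di sin ylo yhi sai sbi u w hμbar hkS hkI hk hα hDipos hDi2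
      hsa1 hsb0 hra hrb hylo hcond1 hcond2 h1 h2 h3 h4
  have hstrict : ∀ t1 t2 : ℝ, 0 ≤ t1 → t1 < t2 →
      (∀ τ ∈ Icc t1 t2, ylo ≤ Y τ ∧ Y τ ≤ yhi) → Y t1 < Y t2 := by
    intro t1 t2 h0 h12 hreg
    have hmono : StrictMonoOn Y (Icc t1 t2) := by
      apply strictMonoOn_of_deriv_pos (convex_Icc t1 t2)
        (hYcont.mono (fun τ hτ => le_trans h0 hτ.1))
      intro τ hτ
      rw [interior_Icc] at hτ
      have ht0 : (0:ℝ) ≤ τ := le_of_lt (lt_of_le_of_lt h0 hτ.1)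
      have hr := hreg τ ⟨hτ.1.le, hτ.2.le⟩
      rw [(hYd τ ht0 hr.1 hr.2).deriv]
      exact hPpos (s τ) (Y τ) (hspos τ ht0) (hYpos τ ht0) hr.1 hr.2
    exact hmono ⟨le_rfl, h12.le⟩ ⟨h12.le, le_rfl⟩ h12
  have hinY0 : ylo ≤ Y 0 := hinit1
  have hinY0' : Y 0 ≤ yhi := hinit2
  have hlo : ∀ t0 : ℝ, 0 ≤ t0 → (∀ t ∈ Icc (0:ℝ) t0, Y t ≤ yhi) → ylo ≤ Y t0 := by
    intro t0 ht0 hub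
    by_contra hcon
    push_neg at hcon
    obtain ⟨w, hwmem, hweq, hwafter⟩ :=
      last_cross (hYcont.mono (fun τ hτ => hτ.1)) ht0 hinY0 hcon
    have hr1 : ylo ≤ Y w := le_of_eq hweq.symm
    have hr2 : Y w ≤ yhi := hub w ⟨hwmem.1, hwmem.2.le⟩
    have hd := hYd w hwmem.1 hr1 hr2
    have hev := ev_gt_of_deriv_pos hd
      (hPpos (s w) (Y w) (hspos w hwmem.1) (hYpos w hwmem.1) hr1 hr2)
    obtain ⟨u, hu1, hu2⟩ := (hev.and (Ioc_mem_nhdsGT_of_mem ⟨le_rfl, hwmem.2⟩)).exists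
    have h3 := hwafter u hu2
    rw [hweq] at hu1
    linarith
  constructor
  · intro t1 t2 h0 h12 hreg
    exact sub_lt_sub_left (hstrict t1 t2 h0 h12 hreg) yan
  · by_cases hcross : ∃ t0 : ℝ, 0 ≤ t0 ∧ yhi ≤ Y t0
    · obtain ⟨t0, ht0, hyt0⟩ := hcross
      obtain ⟨T, hTmem, hTeq, hTbef⟩ :=
        first_cross (hYcont.mono (fun τ hτ => hτ.1)) ht0 hinY0' hyt0
      refine ⟨T, hTmem.1, hTeq, fun t ht => ⟨?_, hTbef t ht⟩⟩
      exact hlo t ht.1 (fun τ hτ => (hTbef τ ⟨hτ.1, lt_of_le_of_lt hτ.2 ht.2⟩).le)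
    · exfalso
      push_neg at hcross
      have hup : ∀ t : ℝ, 0 ≤ t → Y t < yhi := hcross
      have hreg : ∀ t : ℝ, 0 ≤ t → ylo ≤ Y t ∧ Y t ≤ yhi := fun t ht =>
        ⟨hlo t ht (fun τ hτ => (hup τ hτ.1).le), (hup t ht).le⟩
      have hy0le : ∀ t : ℝ, 0 ≤ t → Y 0 ≤ Y t := by
        intro t ht
        rcases eq_or_lt_of_le ht with h | h
        · rw [← h]
        · exact (hstrict 0 t le_rfl h (fun τ hτ => hreg τ hτ.1)).le
      have hyhiB : k/α*yhi < Di*(sin - sai) := by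
        have h2 := mul_lt_mul_of_pos_left hcond2 (div_pos hk hα)
        calc k/α*yhi < k/α*(α * Di / k * (sin - sai)) := h2
          _ = Di*(sin - sai) := by field_simp
      have hky : ∀ t : ℝ, k*(μbar*s t/(kS+s t+(s t)^2/kI))*x t = k/α*Y t := by
        intro t
        rw [hYdef]
        simp only
        set A : ℝ := μbar*s t/(kS+s t+(s t)^2/kI) with hA
        field_simp
      set m : ℝ := min (s 0) sai with hm
      set M : ℝ := max (s 0) sin with hM
      have hm0 : 0 < m := lt_min (hspos 0 le_rfl) hsa1
      have hslo : ∀ t : ℝ, 0 ≤ t → m ≤ s t := by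
        intro t0 ht0
        by_contra hcon
        push_neg at hcon
        set c : ℝ := (s t0 + m)/2 with hc
        have hc1 : s t0 < c := by rw [hc]; linarith
        have hc2 : c < m := by rw [hc]; linarith
        have hcs0 : c ≤ s 0 := by
          rw [hm] at hc2
          linarith [min_le_left (s 0) sai]
        obtain ⟨w, hwmem, hweq, hwafter⟩ :=
          last_cross (hscont.continuousOn) ht0 hcs0 hc1
        have hrw := hreg w hwmem.1
        have hd := hs w hwmem.1 hrw.1 hrw.2
        have hsd_pos : 0 < Di * (sin - s w) - k*(μbar*s w/(kS+s w+(s w)^2/kI))*x w := by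
          rw [hky w]
          have h1 : k/α*Y w ≤ k/α*yhi :=
            mul_le_mul_of_nonneg_left hrw.2 (div_nonneg hk.le hα.le)
          have hswle : s w ≤ sai := by
            rw [hweq]
            rw [hm] at hc2
            linarith [min_le_right (s 0) sai]
          have h2 : Di*(sin - sai) ≤ Di*(sin - s w) :=
            mul_le_mul_of_nonneg_left (by linarith) hDipos.le
          linarith
        have hev := ev_gt_of_deriv_pos hd hsd_pos
        obtain ⟨u, hu1, hu2⟩ :=
          (hev.and (Ioc_mem_nhdsGT_of_mem ⟨le_rfl, hwmem.2⟩)).exists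
        have h3 := hwafter u hu2
        rw [hweq] at hu1
        linarith
      have hshi : ∀ t : ℝ, 0 ≤ t → s t ≤ M := by
        intro t0 ht0
        by_contra hcon
        push_neg at hcon
        set c : ℝ := (M + s t0)/2 with hc
        have hc1 : M < c := by rw [hc]; linarith
        have hc2 : c < s t0 := by rw [hc]; linarith
        have hs0M : s 0 ≤ M := by rw [hM]; exact le_max_left _ _
        obtain ⟨w, hwmem, hweq, hwafter⟩ :=
          last_cross (f := fun t => -(s t)) (hscont.neg.continuousOn) ht0
            (by linarith : -c ≤ -(s 0)) (by linarith : -(s t0) < -c)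
        have hsw : s w = c := by
          have h := hweq
          linarith
        have hrw := hreg w hwmem.1
        have hd := (hs w hwmem.1 hrw.1 hrw.2).neg
        have hsd_neg :
            0 < -(Di * (sin - s w) - k*(μbar*s w/(kS+s w+(s w)^2/kI))*x w) := by
          rw [hky w]
          have h1 : 0 ≤ k/α*Y w :=
            mul_nonneg (div_nonneg hk.le hα.le) (le_trans hylo hrw.1)
          have h2 : sin < s w := by
            rw [hsw]
            rw [hM] at hc1
            linarith [le_max_right (s 0) sin]
          nlinarith [mul_pos hDipos (sub_pos.2 h2)]
        have hev := ev_gt_of_deriv_pos hd hsd_neg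
        obtain ⟨u, hu1, hu2⟩ :=
          (hev.and (Ioc_mem_nhdsGT_of_mem ⟨le_rfl, hwmem.2⟩)).exists
        have h3 := hwafter u hu2
        simp only [Pi.neg_apply] at hu1
        rw [hsw] at hu1
        linarith
      have hKc : IsCompact (Icc m M ×ˢ Icc (Y 0) yhi) := isCompact_Icc.prod isCompact_Icc
      have hKne : (Icc m M ×ˢ Icc (Y 0) yhi).Nonempty := ⟨(s 0, Y 0),
        ⟨⟨min_le_left _ _, le_max_left _ _⟩, ⟨le_rfl, (hup 0 le_rfl).le⟩⟩⟩
      have hQc2 : Continuous (fun p : ℝ×ℝ => kS + p.1 + p.1^2/kI) :=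
        (continuous_const.add continuous_fst).add ((continuous_fst.pow 2).div_const kI)
      have hQne : ∀ p ∈ (Icc m M ×ˢ Icc (Y 0) yhi), kS + p.1 + p.1^2/kI ≠ 0 :=
        fun p hp => (hqpos p.1 (lt_of_lt_of_le hm0 hp.1.1)).ne'
      have hμcK : ContinuousOn (fun p : ℝ×ℝ => μbar*p.1/(kS + p.1 + p.1^2/kI))
          (Icc m M ×ˢ Icc (Y 0) yhi) :=
        ((continuous_const.mul continuous_fst).continuousOn).div hQc2.continuousOn hQne
      have hμneK : ∀ p ∈ (Icc m M ×ˢ Icc (Y 0) yhi),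
          μbar*p.1/(kS + p.1 + p.1^2/kI) ≠ 0 := fun p hp =>
        (div_pos (mul_pos hμbar (lt_of_lt_of_le hm0 hp.1.1))
          (hqpos p.1 (lt_of_lt_of_le hm0 hp.1.1))).ne'
      have hPcont : ContinuousOn (PhiFun μbar kS kI k α Di sin)
          (Icc m M ×ˢ Icc (Y 0) yhi) := by
        unfold PhiFun
        apply ContinuousOn.mul
        · exact (continuous_snd.continuousOn).div hμcK hμneK
        · apply ContinuousOn.add
          · apply ContinuousOn.mul
            · exact ((continuous_const.mul (continuous_const.sub
                ((continuous_fst.pow 2).div_const kI))).continuousOn).div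
                (hQc2.pow 2).continuousOn (fun p hp => pow_ne_zero 2 (hQne p hp))
            · exact ((continuous_const.mul (continuous_const.sub continuous_fst)).sub
                (continuous_const.mul continuous_snd)).continuousOn
          · exact hμcK.mul (hμcK.sub continuousOn_const)
      obtain ⟨p0, hp0K, hp0min⟩ := hKc.exists_isMinOn hKne hPcont
      obtain ⟨ε, hεpos, hεle⟩ : ∃ ε : ℝ, 0 < ε ∧
          ∀ q ∈ (Icc m M ×ˢ Icc (Y 0) yhi), ε ≤ PhiFun μbar kS kI k α Di sin q := by
        refine ⟨PhiFun μbar kS kI k α Di sin p0, ?_, fun q hq => isMinOn_iff.1 hp0min q hq⟩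
        have h1 : 0 < p0.1 := lt_of_lt_of_le hm0 hp0K.1.1
        have h2 : 0 < p0.2 := lt_of_lt_of_le (hYpos 0 le_rfl) hp0K.2.1
        have h3 : ylo ≤ p0.2 := le_trans hinY0 hp0K.2.1
        have h4 := hPpos p0.1 p0.2 h1 h2 h3 hp0K.2.2
        rwa [Prod.mk.eta] at h4
      have hYB : ∀ B : ℝ, 0 < B → Y 0 + ε/2*B < Y B := by
        intro B hB
        have hg : StrictMonoOn (fun t => Y t - ε/2*t) (Icc 0 B) := by
          apply strictMonoOn_of_deriv_pos (convex_Icc 0 B)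
          · exact (hYcont.mono (fun τ hτ => hτ.1)).sub
              (continuous_const.mul continuous_id).continuousOn
          · intro τ hτ
            rw [interior_Icc] at hτ
            have ht0 : (0:ℝ) ≤ τ := hτ.1.le
            have hr := hreg τ ht0
            have hd : HasDerivAt (fun t => Y t - ε/2*t)
                (PhiFun μbar kS kI k α Di sin (s τ, Y τ) - ε/2*1) τ :=
              (hYd τ ht0 hr.1 hr.2).sub ((hasDerivAt_id τ).const_mul (ε/2))
            rw [hd.deriv]
            have hmem : (s τ, Y τ) ∈ (Icc m M ×ˢ Icc (Y 0) yhi) :=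
              ⟨⟨hslo τ ht0, hshi τ ht0⟩, ⟨hy0le τ ht0, hr.2⟩⟩
            have hmin := hεle _ hmem
            linarith
        have h6 : Y 0 - ε/2*0 < Y B - ε/2*B := hg ⟨le_rfl, hB.le⟩ ⟨hB.le, le_rfl⟩ hB
        linarith
      have hY0hi : Y 0 < yhi := hup 0 le_rfl
      have hgen : ∀ a : ℝ, ε/2*(2*a/ε + 1) = a + ε/2 := by
        intro a
        calc ε/2*(2*a/ε + 1) = a * (ε/ε) + ε/2 := by ring
          _ = a + ε/2 := by rw [div_self hεpos.ne']; ring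
      obtain ⟨B, hBpos, hBeq⟩ : ∃ B : ℝ, 0 < B ∧ ε/2*B = (yhi - Y 0) + ε/2 := by
        refine ⟨2*(yhi - Y 0)/ε + 1, ?_, hgen (yhi - Y 0)⟩
        have := div_nonneg (by linarith : (0:ℝ) ≤ 2*(yhi - Y 0)) hεpos.le
        linarith
      have hfin := hYB B hBpos
      have hYb := hup B hBpos.le
      have h8 : Y 0 + ε/2*B < yhi := hfin.trans hYb
      rw [hBeq] at h8
      have h9 : Y 0 + (yhi - Y 0 + ε/2) = yhi + ε/2 := by ring
      rw [h9] at h8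
      exact absurd h8 (not_lt.2 (le_add_of_nonneg_right (by positivity : (0:ℝ) ≤ ε/2)))
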